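/- Let $T$ be a finite nonempty index set with distinguished element $t^*$, let $\Sigma_t > 0$ for each $t \in T$, and let $\tilde y_t : \mathbb{N} \to \mathbb{R}$ be prediction-error sequences. Define likelihoods $p_t(\tau) = (2\pi\Sigma_t)^{-1/2}\exp(-\tilde y_t(\tau)^2/(2\Sigma_t))$ and posteriors recursively from strictly positive priors $\pi_t(0)$ with $\sum_t \pi_t(0) = 1$ by $\pi_t(k) = p_t(k)\pi_t(k-1)/\sum_{s}p_s(k)\pi_s(k-1)$. Assume the Cesàro limits $V_t = \lim_{n\to\infty}\frac{1}{n}\sum_{\tau=1}^{n}\tilde y_t(\tau)^2$ exist for every $t \in T$, with $V_{t^*} = \Sigma_{t^*}$ and $V_t > \Sigma_{t^*}$ for every $t \neq t^*$. Then $\pi_{t^*}(k) \to 1$ and $\pi_t(k) \to 0$ for every $t \neq t^*$ as $k \to \infty$. -/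

import Mathlib

/-- Theorem 3.3: with Gaussian likelihoods of variances `S t` evaluated at the
prediction errors, Bayesian posteriors updated recursively from positive priors, and
Cesàro limits `V t` of the squared prediction errors satisfying `V t* = S t*` and
`V t > S t*` for `t ≠ t*`, the posterior of the true candidate `t*` converges to `1`
and all other posteriors converge to `0`. -/
theorem posterior_convergence {T : Type*} [Fintype T] [Nonempty T] (tstar : T)
    (S : T → ℝ) (hS : ∀ t, 0 < S t)
    (ytil : T → ℕ → ℝ)
    (p : T → ℕ → ℝ)
    (hp : ∀ t τ, p t τ = (Real.sqrt (2 * Real.pi * S t))⁻¹ *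
      Real.exp (-(ytil t τ) ^ 2 / (2 * S t)))
    (π : ℕ → T → ℝ)
    (hπ0pos : ∀ t, 0 < π 0 t) (hπ0sum : ∑ t, π 0 t = 1)
    (hrec : ∀ k, 1 ≤ k → ∀ t,
      π k t = p t k * π (k - 1) t / ∑ s, p s k * π (k - 1) s)
    (V : T → ℝ)
    (hV : ∀ t, Filter.Tendsto
      (fun n : ℕ => 1 / (n : ℝ) * ∑ τ ∈ Finset.Icc 1 n, (ytil t τ) ^ 2)
      Filter.atTop (nhds (V t)))
    (hVstar : V tstar = S tstar)
    (hVt : ∀ t, t ≠ tstar → S tstar < V t) :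
    Filter.Tendsto (fun k => π k tstar) Filter.atTop (nhds 1) ∧
    ∀ t, t ≠ tstar → Filter.Tendsto (fun k => π k t) Filter.atTop (nhds 0) := by
  classical
  -- positivity of likelihoods
  have hppos : ∀ t τ, 0 < p t τ := by
    intro t τ
    rw [hp]
    have h1 : 0 < Real.sqrt (2 * Real.pi * S t) :=
      Real.sqrt_pos.mpr (by have := Real.pi_pos; have := hS t; positivity)
    positivity
  -- positivity of posteriors
  have hπpos : ∀ k t, 0 < π k t := by
    intro k
    induction k with
    | zero => exact hπ0pos
    | succ m ih =>
      intro t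
      have hrec' := hrec (m + 1) (Nat.le_add_left 1 m) t
      simp only [Nat.add_sub_cancel] at hrec'
      rw [hrec']
      have hZ : 0 < ∑ s, p s (m + 1) * π m s :=
        Finset.sum_pos (fun s _ => mul_pos (hppos s (m + 1)) (ih s)) Finset.univ_nonempty
      exact div_pos (mul_pos (hppos t (m + 1)) (ih t)) hZ
  -- posteriors sum to one
  have hsum1 : ∀ k, ∑ t, π k t = 1 := by
    intro k
    cases k with
    | zero => exact hπ0sum
    | succ m =>
      have hZ : 0 < ∑ s, p s (m + 1) * π m s :=
        Finset.sum_pos (fun s _ => mul_pos (hppos s (m + 1)) (hπpos m s))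
          Finset.univ_nonempty
      have : ∑ t, π (m + 1) t
          = ∑ t, p t (m + 1) * π m t / (∑ s, p s (m + 1) * π m s) := by
        refine Finset.sum_congr rfl fun t _ => ?_
        have := hrec (m + 1) (Nat.le_add_left 1 m) t
        simpa using this
      rw [this, ← Finset.sum_div, div_self hZ.ne']
  -- ratio formula
  have hratio : ∀ t n, π n t / π n tstar
      = (π 0 t / π 0 tstar) * ∏ k ∈ Finset.Icc 1 n, (p t k / p tstar k) := by
    intro t n
    induction n with
    | zero => simp
    | succ m ih =>
      rw [Finset.prod_Icc_succ_top (Nat.le_add_left 1 m), ← mul_assoc, ← ih]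
      have h1 := hrec (m + 1) (Nat.le_add_left 1 m) t
      have h2 := hrec (m + 1) (Nat.le_add_left 1 m) tstar
      simp only [Nat.add_sub_cancel] at h1 h2
      rw [h1, h2]
      have hZ : 0 < ∑ s, p s (m + 1) * π m s :=
        Finset.sum_pos (fun s _ => mul_pos (hppos s (m + 1)) (hπpos m s))
          Finset.univ_nonempty
      field_simp
  -- key convergence for each t ≠ tstar : the ratio tends to 0
  have hR0 : ∀ t, t ≠ tstar →
      Filter.Tendsto (fun n => π n t / π n tstar) Filter.atTop (nhds 0) := by
    intro t ht
    set A : T → ℝ := fun s => Real.log (Real.sqrt (2 * Real.pi * S s)) with hA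
    have hlogp : ∀ s k, Real.log (p s k) = -(A s) - ytil s k ^ 2 / (2 * S s) := by
      intro s k
      have h1 : 0 < Real.sqrt (2 * Real.pi * S s) :=
        Real.sqrt_pos.mpr (by have := Real.pi_pos; have := hS s; positivity)
      rw [hp, Real.log_mul (by positivity) (Real.exp_ne_zero _), Real.log_inv,
        Real.log_exp, hA, neg_div]
      ring
    -- Cesàro limit of the log likelihood ratio sum
    have hg0 : Filter.Tendsto
        (fun n : ℕ => 1 / (n : ℝ) *
          ∑ k ∈ Finset.Icc 1 n, (Real.log (p t k) - Real.log (p tstar k)))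
        Filter.atTop (nhds ((A tstar - A t) + (1 / (2 * S tstar)) * V tstar
          - (1 / (2 * S t)) * V t)) := by
      have heq : (fun n : ℕ => 1 / (n : ℝ) *
            ∑ k ∈ Finset.Icc 1 n, (Real.log (p t k) - Real.log (p tstar k)))
          =ᶠ[Filter.atTop]
          (fun n : ℕ => (A tstar - A t)
            + (1 / (2 * S tstar)) * (1 / (n : ℝ) * ∑ k ∈ Finset.Icc 1 n, ytil tstar k ^ 2)
            - (1 / (2 * S t)) * (1 / (n : ℝ) * ∑ k ∈ Finset.Icc 1 n, ytil t k ^ 2)) := by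
        filter_upwards [Filter.eventually_ge_atTop 1] with n hn
        have hn0 : (n : ℝ) ≠ 0 := Nat.cast_ne_zero.mpr (by omega)
        have hsum : ∑ k ∈ Finset.Icc 1 n, (Real.log (p t k) - Real.log (p tstar k))
            = (n : ℝ) * (A tstar - A t)
              + (1 / (2 * S tstar)) * (∑ k ∈ Finset.Icc 1 n, ytil tstar k ^ 2)
              - (1 / (2 * S t)) * (∑ k ∈ Finset.Icc 1 n, ytil t k ^ 2) := by
          have : ∀ k ∈ Finset.Icc 1 n, Real.log (p t k) - Real.log (p tstar k)
              = (A tstar - A t) + (1 / (2 * S tstar)) * ytil tstar k ^ 2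
                - (1 / (2 * S t)) * ytil t k ^ 2 := by
            intro k _
            rw [hlogp, hlogp]
            field_simp
            ring
          rw [Finset.sum_congr rfl this]
          rw [Finset.sum_sub_distrib, Finset.sum_add_distrib, Finset.sum_const,
            Nat.card_Icc, ← Finset.mul_sum, ← Finset.mul_sum]
          simp [nsmul_eq_mul]
        rw [hsum, mul_sub, mul_add, ← mul_assoc, one_div_mul_cancel hn0, one_mul]
        ring
      refine Filter.Tendsto.congr' heq.symm ?_
      have h1 := (hV tstar).const_mul (1 / (2 * S tstar))
      have h2 := (hV t).const_mul (1 / (2 * S t))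
      exact ((tendsto_const_nhds (x := A tstar - A t)).add h1).sub h2
    -- the limit is negative
    have hcneg0 : (A tstar - A t) + (1 / (2 * S tstar)) * V tstar
        - (1 / (2 * S t)) * V t < 0 := by
      have hSt := hS t
      have hSs := hS tstar
      have hAA : A tstar - A t = (1 / 2) * Real.log (S tstar / S t) := by
        rw [hA]
        simp only
        rw [Real.log_sqrt (by have := Real.pi_pos; positivity),
          Real.log_sqrt (by have := Real.pi_pos; positivity),
          Real.log_mul (by have := Real.pi_pos; positivity) hSs.ne',
          Real.log_mul (by have := Real.pi_pos; positivity) hSt.ne',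
          Real.log_div hSs.ne' hSt.ne']
        ring
      have hlog : Real.log (S tstar / S t) ≤ S tstar / S t - 1 :=
        Real.log_le_sub_one_of_pos (by positivity)
      have hVtgt : S tstar < V t := hVt t ht
      have hfrac : S tstar / S t < V t / S t := by gcongr
      rw [hAA, hVstar]
      have h1 : (1 / (2 * S tstar)) * S tstar = 1 / 2 := by
        field_simp
      have h2 : (1 / (2 * S t)) * V t = (V t / S t) / 2 := by
        field_simp
      rw [h1, h2]
      linarith [hlog, hfrac]
    obtain ⟨c, hcneg, hg⟩ : ∃ c, c < 0 ∧ Filter.Tendsto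
        (fun n : ℕ => 1 / (n : ℝ) *
          ∑ k ∈ Finset.Icc 1 n, (Real.log (p t k) - Real.log (p tstar k)))
        Filter.atTop (nhds c) := ⟨_, hcneg0, hg0⟩
    -- log of the ratio tends to -∞
    have hK : 0 < π 0 t / π 0 tstar := div_pos (hπ0pos t) (hπ0pos tstar)
    have hRpos : ∀ n, 0 < π n t / π n tstar :=
      fun n => div_pos (hπpos n t) (hπpos n tstar)
    have hlogR : ∀ n, Real.log (π n t / π n tstar)
        = Real.log (π 0 t / π 0 tstar)
          + ∑ k ∈ Finset.Icc 1 n, (Real.log (p t k) - Real.log (p tstar k)) := by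
      intro n
      rw [hratio t n, Real.log_mul hK.ne'
        (Finset.prod_ne_zero_iff.mpr fun k _ =>
          (div_pos (hppos t k) (hppos tstar k)).ne'),
        Real.log_prod (fun k _ => (div_pos (hppos t k) (hppos tstar k)).ne')]
      congr 1
      exact Finset.sum_congr rfl fun k _ =>
        Real.log_div (hppos t k).ne' (hppos tstar k).ne'
    have hbot : Filter.Tendsto (fun n => Real.log (π n t / π n tstar))
        Filter.atTop Filter.atBot := by
      have hmul : Filter.Tendsto
          (fun n : ℕ => (n : ℝ) * (1 / (n : ℝ) *
            ∑ k ∈ Finset.Icc 1 n, (Real.log (p t k) - Real.log (p tstar k))))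
          Filter.atTop Filter.atBot := by
        have hev : ∀ᶠ n : ℕ in Filter.atTop,
            (n : ℝ) * (1 / (n : ℝ) *
              ∑ k ∈ Finset.Icc 1 n, (Real.log (p t k) - Real.log (p tstar k)))
            ≤ (n : ℝ) * (c / 2) := by
          filter_upwards [hg.eventually_le_const (by linarith : c < c / 2)] with n hn
          exact mul_le_mul_of_nonneg_left hn (Nat.cast_nonneg n)
        refine Filter.tendsto_atBot_mono' Filter.atTop hev ?_
        exact tendsto_natCast_atTop_atTop.atTop_mul_const_of_neg (by linarith)
      have hev2 : (fun n => Real.log (π n t / π n tstar)) =ᶠ[Filter.atTop]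
          (fun n : ℕ => Real.log (π 0 t / π 0 tstar) + (n : ℝ) * (1 / (n : ℝ) *
            ∑ k ∈ Finset.Icc 1 n, (Real.log (p t k) - Real.log (p tstar k)))) := by
        filter_upwards [Filter.eventually_ge_atTop 1] with n hn
        have hn0 : (n : ℝ) ≠ 0 := Nat.cast_ne_zero.mpr (by omega)
        rw [hlogR n, ← mul_assoc, mul_one_div, div_self hn0, one_mul]
      exact Filter.Tendsto.congr' hev2.symm (Filter.tendsto_atBot_add_const_left _ _ hmul)
    have : Filter.Tendsto (fun n => π n t / π n tstar) Filter.atTop (nhds 0) := by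
      have := Real.tendsto_exp_atBot.comp hbot
      refine this.congr fun n => ?_
      exact Real.exp_log (hRpos n)
    exact this
  -- posteriors of wrong candidates tend to 0
  have hzero : ∀ t, t ≠ tstar →
      Filter.Tendsto (fun k => π k t) Filter.atTop (nhds 0) := by
    intro t ht
    refine squeeze_zero (fun n => (hπpos n t).le) (fun n => ?_) (hR0 t ht)
    have hle1 : π n tstar ≤ 1 := by
      rw [← hsum1 n]
      exact Finset.single_le_sum (fun s _ => (hπpos n s).le) (Finset.mem_univ tstar)
    calc π n t = π n t / π n tstar * π n tstar := by
          rw [div_mul_cancel₀ _ (hπpos n tstar).ne']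
      _ ≤ π n t / π n tstar * 1 :=
          mul_le_mul_of_nonneg_left hle1 (div_pos (hπpos n t) (hπpos n tstar)).le
      _ = π n t / π n tstar := mul_one _
  refine ⟨?_, hzero⟩
  -- π k tstar = 1 - ∑ over others
  have heq : ∀ k, π k tstar = 1 - ∑ t ∈ Finset.univ.erase tstar, π k t := by
    intro k
    have := Finset.add_sum_erase Finset.univ (π k) (Finset.mem_univ tstar)
    rw [hsum1 k] at this
    linarith
  have hsumz : Filter.Tendsto
      (fun k => ∑ t ∈ Finset.univ.erase tstar, π k t) Filter.atTop (nhds 0) := by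
    have := tendsto_finset_sum (f := fun t k => π k t) (a := fun _ => (0 : ℝ))
      (Finset.univ.erase tstar)
      (fun t htmem => hzero t (Finset.ne_of_mem_erase htmem))
    simpa using this
  have h1 : Filter.Tendsto (fun k => 1 - ∑ t ∈ Finset.univ.erase tstar, π k t)
      Filter.atTop (nhds 1) := by
    simpa using (tendsto_const_nhds (x := (1:ℝ))).sub hsumz
  exact h1.congr fun k => (heq k).symm
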